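/- arXiv:1705.08219 — 5 statements merged into one kernel-verified Lean document; each statement's English description precedes it below -/
import Mathlib

section
/- Let g₁,…,g_m : ℝⁿ → ℝ be differentiable, x a feasible point of C = [g₁ ≤ 0,…,g_m ≤ 0], and I(x) the set of active indices. Then there exists y ∈ ℝⁿ with ⟨y, ∇g_i(x)⟩ < 0 for all i ∈ I(x) if and only if 0 ∉ conv{∇g_i(x) | i ∈ I(x)}. -/
open RealInnerProductSpace

theorem stmt1 {n m : ℕ} (g : Fin m → EuclideanSpace ℝ (Fin n) → ℝ)
    (hg : ∀ i, Differentiable ℝ (g i)) (x : EuclideanSpace ℝ (Fin n))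
    (hx : ∀ i, g i x ≤ 0) :
    (∃ y : EuclideanSpace ℝ (Fin n), ∀ i, g i x = 0 → ⟪y, gradient (g i) x⟫ < 0) ↔
      (0 : EuclideanSpace ℝ (Fin n)) ∉
        convexHull ℝ ((fun i => gradient (g i) x) '' {i | g i x = 0}) := by
  set S : Set (EuclideanSpace ℝ (Fin n)) := (fun i => gradient (g i) x) '' {i | g i x = 0}
  constructor
  · rintro ⟨y, hy⟩ h0
    have hsub : S ⊆ {v | ⟪y, v⟫ < 0} := by
      rintro v ⟨i, hi, rfl⟩
      exact hy i hi
    have hconv : Convex ℝ {v : EuclideanSpace ℝ (Fin n) | ⟪y, v⟫ < 0} :=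
      convex_halfSpace_lt ⟨fun a b => inner_add_right y a b,
        fun c a => real_inner_smul_right y a c⟩ 0
    have := convexHull_min hsub hconv h0
    simp at this
  · intro h0
    have hfin : S.Finite := ((Set.finite_univ.subset (Set.subset_univ _)).image _)
    have hcl : IsClosed (convexHull ℝ S) := (hfin.isCompact_convexHull ℝ).isClosed
    obtain ⟨f, u, hfu, hub⟩ := geometric_hahn_banach_point_closed
      (convex_convexHull ℝ S) hcl h0
    obtain ⟨z, hz⟩ := (InnerProductSpace.toDual ℝ (EuclideanSpace ℝ (Fin n))).surjective f
    refine ⟨-z, fun i hi => ?_⟩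
    have hv : u < f (gradient (g i) x) := hub _ (subset_convexHull ℝ S ⟨i, hi, rfl⟩)
    have h0' : f 0 = 0 := map_zero f
    rw [h0'] at hfu
    have : ⟪z, gradient (g i) x⟫ = f (gradient (g i) x) := by
      rw [← hz]; rfl
    rw [inner_neg_left, this]
    linarith
end

section
/- Let g₁,…,g_m, h₁,…,h_r : ℝⁿ → ℝ be differentiable, and x a point with g_i(x) ≤ 0 and h_j(x) = 0 for all i, j. Then there exists y ∈ ℝⁿ satisfying ⟨y, ∇h_j(x)⟩ = 0 for all j and ⟨y, ∇g_i(x)⟩ < 0 for all active i ∈ I(x), if and only if conv{∇g_i(x) | i ∈ I(x)} ∩ span{∇h_j(x) | 1 ≤ j ≤ r} = ∅. -/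
open RealInnerProductSpace

theorem stmt2 {n m r : ℕ} (g : Fin m → EuclideanSpace ℝ (Fin n) → ℝ)
    (h : Fin r → EuclideanSpace ℝ (Fin n) → ℝ)
    (hg : ∀ i, Differentiable ℝ (g i)) (hh : ∀ j, Differentiable ℝ (h j))
    (x : EuclideanSpace ℝ (Fin n))
    (hxg : ∀ i, g i x ≤ 0) (hxh : ∀ j, h j x = 0) :
    (∃ y : EuclideanSpace ℝ (Fin n),
        (∀ j, ⟪y, gradient (h j) x⟫ = 0) ∧
        ∀ i, g i x = 0 → ⟪y, gradient (g i) x⟫ < 0) ↔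
      convexHull ℝ ((fun i => gradient (g i) x) '' {i | g i x = 0}) ∩
        (Submodule.span ℝ (Set.range fun j => gradient (h j) x) :
          Set (EuclideanSpace ℝ (Fin n))) = ∅ := by
  set A : Set (EuclideanSpace ℝ (Fin n)) :=
    (fun i => gradient (g i) x) '' {i | g i x = 0} with hA
  set S : Submodule ℝ (EuclideanSpace ℝ (Fin n)) :=
    Submodule.span ℝ (Set.range fun j => gradient (h j) x) with hS
  constructor
  · rintro ⟨y, hy1, hy2⟩
    rw [Set.eq_empty_iff_forall_notMem]
    rintro z ⟨hz1, hz2⟩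
    -- ⟪y, z⟫ < 0 from the hull
    have hhalf : convexHull ℝ A ⊆ {v | ⟪y, v⟫ < 0} := by
      apply convexHull_min
      · rintro v ⟨i, hi, rfl⟩
        exact hy2 i hi
      · exact convex_halfSpace_lt ⟨fun a b => inner_add_right _ _ _,
          fun c a => real_inner_smul_right _ _ _⟩ 0
    have h1 : ⟪y, z⟫ < 0 := hhalf hz1
    -- ⟪y, z⟫ = 0 from the span
    have h2 : ⟪y, z⟫ = 0 := by
      refine Submodule.span_induction ?_ ?_ ?_ ?_ hz2
      · rintro v ⟨j, rfl⟩; exact hy1 j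
      · exact inner_zero_right y
      · intro a b _ _ ha hb; rw [inner_add_right, ha, hb, add_zero]
      · intro c a _ ha; rw [real_inner_smul_right, ha, mul_zero]
    exact absurd h2 (ne_of_lt h1)
  · intro hdisj
    by_cases hAe : A = ∅
    · refine ⟨0, fun j => inner_zero_left _, fun i hi => ?_⟩
      exfalso
      have hmem : gradient (g i) x ∈ A := Set.mem_image_of_mem _ hi
      rw [hAe] at hmem
      exact hmem
    · have hAfin : A.Finite := Set.Finite.image _ (Set.toFinite _)
      have hcomp : IsCompact (convexHull ℝ A) := hAfin.isCompact_convexHull ℝ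
      have hclosed : IsClosed (S : Set (EuclideanSpace ℝ (Fin n))) :=
        Submodule.closed_of_finiteDimensional S
      obtain ⟨f, u, v, hfu, huv, hfv⟩ :=
        geometric_hahn_banach_compact_closed (convex_convexHull ℝ A) hcomp
          S.convex hclosed (Set.disjoint_iff_inter_eq_empty.mpr hdisj)
      -- f vanishes on S
      have hfS : ∀ b ∈ S, f b = 0 := by
        intro b hb
        by_contra hfb
        have : v < f ((v / f b) • b) := hfv _ (S.smul_mem _ hb)
        rw [map_smul, smul_eq_mul, div_mul_cancel₀ _ hfb] at this
        exact lt_irrefl _ this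
      have hv0 : v < 0 := by
        have := hfv 0 S.zero_mem
        rwa [map_zero] at this
      set y := (InnerProductSpace.toDual ℝ (EuclideanSpace ℝ (Fin n))).symm f with hy
      have hyz : ∀ z, ⟪y, z⟫ = f z := fun z =>
        InnerProductSpace.toDual_symm_apply
      refine ⟨y, fun j => ?_, fun i hi => ?_⟩
      · rw [hyz]
        exact hfS _ (Submodule.subset_span ⟨j, rfl⟩)
      · rw [hyz]
        have : gradient (g i) x ∈ convexHull ℝ A :=
          subset_convexHull ℝ A (Set.mem_image_of_mem _ hi)
        exact lt_trans (lt_trans (hfu _ this) huv) hv0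
end

section
/- Let f, g₁,…,g_m : ℝⁿ → ℝ be continuous. Assume C₀ = {x | g_i(x) ≤ 0 ∀i} is nonempty and C_{μ'} is bounded for some μ' with all entries positive. Then the value function val(μ) = min{f(x) | x ∈ C_μ}, defined for μ ∈ ℝ₊^m, is continuous at 0: val(μ) → val(0) as μ → 0 with μ ∈ ℝ₊^m. -/
open Filter Set

theorem stmt6 {n m : ℕ} (f : (Fin n → ℝ) → ℝ) (g : Fin m → (Fin n → ℝ) → ℝ)
    (hf : Continuous f) (hg : ∀ i, Continuous (g i))
    (hC0 : {x : Fin n → ℝ | ∀ i, g i x ≤ 0}.Nonempty)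
    (μ' : Fin m → ℝ) (hμ' : ∀ i, 0 < μ' i)
    (hbdd : Bornology.IsBounded {x : Fin n → ℝ | ∀ i, g i x ≤ μ' i}) :
    Tendsto (fun μ : Fin m → ℝ => sInf (f '' {x | ∀ i, g i x ≤ μ i}))
      (nhdsWithin 0 {μ : Fin m → ℝ | ∀ i, 0 ≤ μ i})
      (nhds (sInf (f '' {x | ∀ i, g i x ≤ 0}))) := by
  set K : Set (Fin n → ℝ) := {x | ∀ i, g i x ≤ μ' i} with hKdef
  have hKcl : IsClosed K := by
    have : K = ⋂ i, {x | g i x ≤ μ' i} := by ext x; simp [hKdef, Set.mem_iInter]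
    rw [this]
    exact isClosed_iInter fun i => isClosed_le (hg i) continuous_const
  have hK : IsCompact K := Metric.isCompact_of_isClosed_isBounded hKcl hbdd
  have hbb : BddBelow (f '' K) := (hK.image hf).bddBelow
  have hC0K : {x : Fin n → ℝ | ∀ i, g i x ≤ 0} ⊆ K :=
    fun x hx i => (hx i).trans (hμ' i).le
  set val0 := sInf (f '' {x : Fin n → ℝ | ∀ i, g i x ≤ 0}) with hval0
  -- lower bound on f over C₀
  have hval0le : ∀ x, (∀ i, g i x ≤ 0) → val0 ≤ f x := fun x hx =>
    csInf_le (hbb.mono (Set.image_mono (f := f) hC0K)) ⟨x, hx, rfl⟩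
  obtain ⟨δ₀, hδ₀pos, hδ₀le⟩ : ∃ δ₀, 0 < δ₀ ∧ ∀ i, δ₀ ≤ μ' i := by
    rcases isEmpty_or_nonempty (Fin m) with h | h
    · exact ⟨1, one_pos, fun i => (IsEmpty.false i).elim⟩
    · refine ⟨Finset.univ.inf' Finset.univ_nonempty μ', ?_, fun i => Finset.inf'_le _ (Finset.mem_univ i)⟩
      exact (Finset.lt_inf'_iff _).mpr fun i _ => hμ' i
  -- key claim
  have key : ∀ ε > 0, ∃ δ, 0 < δ ∧ δ ≤ δ₀ ∧ ∀ x, (∀ i, g i x ≤ δ) → val0 - ε ≤ f x := by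
    intro ε hε
    by_contra hcon
    push_neg at hcon
    set A : ℕ → Set (Fin n → ℝ) :=
      fun k => {x | (∀ i, g i x ≤ min δ₀ (1/(k+1))) ∧ f x ≤ val0 - ε} with hA
    have hAK : ∀ k, A k ⊆ K := fun k x hx i =>
      ((hx.1 i).trans (min_le_left _ _)).trans (hδ₀le i)
    have hAcl : ∀ k, IsClosed (A k) := by
      intro k
      have : A k = (⋂ i, {x | g i x ≤ min δ₀ (1/(k+1))}) ∩ {x | f x ≤ val0 - ε} := by
        ext x; simp [hA, Set.mem_iInter]
      rw [this]
      exact IsClosed.inter (isClosed_iInter fun i => isClosed_le (hg i) continuous_const)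
        (isClosed_le hf continuous_const)
    have hAanti : Antitone A := by
      intro k l hkl x hx
      refine ⟨fun i => (hx.1 i).trans (min_le_min le_rfl ?_), hx.2⟩
      apply one_div_le_one_div_of_le (by positivity)
      exact_mod_cast Nat.succ_le_succ hkl
    have hAne : ∀ k, (A k).Nonempty := by
      intro k
      obtain ⟨x, hx1, hx2⟩ := hcon (min δ₀ (1/(k+1)))
        (lt_min hδ₀pos (by positivity)) (min_le_left _ _)
      exact ⟨x, hx1, hx2.le⟩
    obtain ⟨x, hx⟩ := IsCompact.nonempty_iInter_of_directed_nonempty_isCompact_isClosed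
      A hAanti.directed_ge hAne (fun k => (hK.of_isClosed_subset (hAcl k) (hAK k)))
      hAcl
    simp only [Set.mem_iInter] at hx
    have hgx : ∀ i, g i x ≤ 0 := by
      intro i
      refine ge_of_tendsto' tendsto_one_div_add_atTop_nhds_zero_nat (fun k => ?_)
      exact (hx k).1 i |>.trans (min_le_right _ _)
    have := hval0le x hgx
    have := (hx 0).2
    linarith
  rw [Metric.tendsto_nhdsWithin_nhds]
  intro ε hε
  obtain ⟨δ, hδpos, hδle, hδ⟩ := key (ε/2) (by positivity)
  refine ⟨δ, hδpos, fun μ hμ hdist => ?_⟩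
  have hμi : ∀ i, μ i < δ := by
    intro i
    have h1 : dist (μ i) 0 ≤ dist μ 0 := dist_le_pi_dist μ 0 i
    rw [Real.dist_eq, sub_zero, abs_of_nonneg (hμ i)] at h1
    exact lt_of_le_of_lt h1 hdist
  have hsub0 : {x : Fin n → ℝ | ∀ i, g i x ≤ 0} ⊆ {x | ∀ i, g i x ≤ μ i} :=
    fun x hx i => (hx i).trans (hμ i)
  have hsubK : {x : Fin n → ℝ | ∀ i, g i x ≤ μ i} ⊆ K :=
    fun x hx i => (hx i).trans (((hμi i).le.trans hδle).trans (hδ₀le i))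
  have hbbμ : BddBelow (f '' {x : Fin n → ℝ | ∀ i, g i x ≤ μ i}) :=
    hbb.mono (Set.image_mono (f := f) hsubK)
  have hne : (f '' {x : Fin n → ℝ | ∀ i, g i x ≤ μ i}).Nonempty :=
    (hC0.mono hsub0).image f
  have hupper : sInf (f '' {x | ∀ i, g i x ≤ μ i}) ≤ val0 :=
    csInf_le_csInf hbbμ (hC0.image f) (Set.image_mono (f := f) hsub0)
  have hlower : val0 - ε/2 ≤ sInf (f '' {x | ∀ i, g i x ≤ μ i}) := by
    refine le_csInf hne ?_
    rintro y ⟨x, hx, rfl⟩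
    exact hδ x fun i => (hx i).trans (hμi i).le
  rw [Real.dist_eq, abs_sub_lt_iff]
  constructor <;> linarith
end

section
/- In ℝ², let g(x₁,x₂) = x₂ and h(x₁,x₂) = x₂ - x₁². For every μ ∈ ℝ, the set [g ≤ μ] ∩ [h = μ] = {(0,μ)}, and MFCQ fails at (0,μ) since the inequality constraint is active and ∇g(0,μ) = ∇h(0,μ) = (0,1), so conv{∇g(0,μ)} ∩ span{∇h(0,μ)} ≠ ∅. -/
noncomputable def g12 : EuclideanSpace ℝ (Fin 2) → ℝ := fun x => x 1
noncomputable def h12 : EuclideanSpace ℝ (Fin 2) → ℝ := fun x => x 1 - (x 0)^2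

open InnerProductSpace

lemma toDual_single_one :
    (InnerProductSpace.toDual ℝ (EuclideanSpace ℝ (Fin 2)))
      (EuclideanSpace.single (1 : Fin 2) (1 : ℝ)) =
    (EuclideanSpace.proj (1 : Fin 2) : EuclideanSpace ℝ (Fin 2) →L[ℝ] ℝ) := by
  ext y
  simp [InnerProductSpace.toDual_apply_apply, EuclideanSpace.inner_single_left]

lemma hasGradientAt_g12 (x : EuclideanSpace ℝ (Fin 2)) :
    HasGradientAt g12 (EuclideanSpace.single (1 : Fin 2) (1 : ℝ)) x := by
  rw [hasGradientAt_iff_hasFDerivAt, toDual_single_one]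
  have := ((EuclideanSpace.proj (1 : Fin 2)) :
      EuclideanSpace ℝ (Fin 2) →L[ℝ] ℝ).hasFDerivAt (x := x)
  exact this

lemma grad_g12 (x : EuclideanSpace ℝ (Fin 2)) :
    gradient g12 x = EuclideanSpace.single (1 : Fin 2) (1 : ℝ) :=
  (hasGradientAt_g12 x).gradient

lemma hasGradientAt_h12 (μ : ℝ) :
    HasGradientAt h12 (EuclideanSpace.single (1 : Fin 2) (1 : ℝ))
      (EuclideanSpace.single (1 : Fin 2) μ) := by
  rw [hasGradientAt_iff_hasFDerivAt, toDual_single_one]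
  have h0 : HasFDerivAt (fun x : EuclideanSpace ℝ (Fin 2) => x 0)
      ((EuclideanSpace.proj (0 : Fin 2)) : EuclideanSpace ℝ (Fin 2) →L[ℝ] ℝ)
      (EuclideanSpace.single (1 : Fin 2) μ) := by
    have := ((EuclideanSpace.proj (0 : Fin 2)) :
      EuclideanSpace ℝ (Fin 2) →L[ℝ] ℝ).hasFDerivAt
      (x := EuclideanSpace.single (1 : Fin 2) μ)
    exact this
  have hsq := h0.mul h0
  have h1 : HasFDerivAt (fun x : EuclideanSpace ℝ (Fin 2) => x 1)
      ((EuclideanSpace.proj (1 : Fin 2)) : EuclideanSpace ℝ (Fin 2) →L[ℝ] ℝ)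
      (EuclideanSpace.single (1 : Fin 2) μ) := by
    have := ((EuclideanSpace.proj (1 : Fin 2)) :
      EuclideanSpace ℝ (Fin 2) →L[ℝ] ℝ).hasFDerivAt
      (x := EuclideanSpace.single (1 : Fin 2) μ)
    exact this
  have heq : h12 = fun x : EuclideanSpace ℝ (Fin 2) => x 1 - x 0 * x 0 := by
    funext x; simp [h12, pow_two]
  rw [heq]
  exact (h1.sub hsq).congr_fderiv (by ext y; simp [EuclideanSpace.single_apply])

lemma grad_h12 (μ : ℝ) :
    gradient h12 (EuclideanSpace.single (1 : Fin 2) μ) =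
      EuclideanSpace.single (1 : Fin 2) (1 : ℝ) :=
  (hasGradientAt_h12 μ).gradient

theorem stmt12 (μ : ℝ) :
    {x : EuclideanSpace ℝ (Fin 2) | g12 x ≤ μ ∧ h12 x = μ} =
      {EuclideanSpace.single (1 : Fin 2) μ} ∧
    g12 (EuclideanSpace.single (1 : Fin 2) μ) = μ ∧
    (gradient g12 (EuclideanSpace.single (1 : Fin 2) μ)) 0 = 0 ∧
    (gradient g12 (EuclideanSpace.single (1 : Fin 2) μ)) 1 = 1 ∧
    gradient g12 (EuclideanSpace.single (1 : Fin 2) μ) =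
      gradient h12 (EuclideanSpace.single (1 : Fin 2) μ) ∧
    (convexHull ℝ {gradient g12 (EuclideanSpace.single (1 : Fin 2) μ)} ∩
      (Submodule.span ℝ {gradient h12 (EuclideanSpace.single (1 : Fin 2) μ)} :
        Set (EuclideanSpace ℝ (Fin 2)))).Nonempty := by
  refine ⟨?_, ?_, ?_, ?_, ?_, ?_⟩
  · ext x
    simp only [Set.mem_setOf_eq, Set.mem_singleton_iff, g12, h12]
    constructor
    · rintro ⟨hle, heq⟩
      have hx0 : x 0 = 0 := by nlinarith [sq_nonneg (x 0)]
      have hx1 : x 1 = μ := by nlinarith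
      ext i
      fin_cases i <;> simp [hx0, hx1, EuclideanSpace.single_apply]
    · rintro rfl
      simp [EuclideanSpace.single_apply]
  · simp [g12, EuclideanSpace.single_apply]
  · simp [grad_g12, EuclideanSpace.single_apply]
  · simp [grad_g12, EuclideanSpace.single_apply]
  · rw [grad_g12, grad_h12]
  · refine ⟨gradient g12 (EuclideanSpace.single (1 : Fin 2) μ), ?_, ?_⟩
    · simp [convexHull_singleton]
    · rw [grad_g12, grad_h12]
      exact Submodule.subset_span rfl
end

section
/- Let a ∈ (-1,1)ⁿ, α ∈ ℝ with α < 4n, and consider in ℝⁿ the constraints g₀(x) = 4n - ‖x - a‖² ≤ α, g_i(x) = x_i² ≤ 1 (i = 1,…,n). Let z be a feasible point with g₀ active (i.e., ‖z - a‖² = 4n - α) and active index set I ⊆ {1,…,n} (i.e., z_i = v_i ∈ {±1} for i ∈ I, |z_j| < 1 for j ∉ I, I nonempty). Then -∇g₀(z) = 2(z - a) lies in the convex cone generated by {∇g_i(z) = 2 v_i e_i | i ∈ I} if and only if z_j = a_j for every j ∉ I. -/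
lemma euclid_sum_apply {n : ℕ} {ι : Type*} (s : Finset ι)
    (f : ι → EuclideanSpace ℝ (Fin n)) (j : Fin n) :
    (∑ i ∈ s, f i) j = ∑ i ∈ s, f i j := by
  induction s using Finset.cons_induction with
  | empty => rfl
  | cons i s hi ih =>
      rw [Finset.sum_cons, Finset.sum_cons, ← ih]
      rfl

theorem stmt14 {n : ℕ} (a z : EuclideanSpace ℝ (Fin n)) (α : ℝ)
    (ha : ∀ i, a i ∈ Set.Ioo (-1 : ℝ) 1)
    (hα : α < 4 * n)
    (hfeas : ∀ i, (z i)^2 ≤ 1)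
    (hactive : ‖z - a‖^2 = 4 * n - α)
    (I : Finset (Fin n)) (hI : I.Nonempty) (v : Fin n → ℝ)
    (hv : ∀ i ∈ I, v i = 1 ∨ v i = -1)
    (hzI : ∀ i ∈ I, z i = v i)
    (hzJ : ∀ j ∉ I, |z j| < 1) :
    (∃ lam : Fin n → ℝ, (∀ i, 0 ≤ lam i) ∧
        (2 : ℝ) • (z - a) =
          ∑ i ∈ I, lam i • ((2 * v i) • EuclideanSpace.single i (1 : ℝ))) ↔
      ∀ j ∉ I, z j = a j := by
  constructor
  · rintro ⟨lam, -, heq⟩ j hj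
    have h := congrFun (congrArg (fun w : EuclideanSpace ℝ (Fin n) => (w : Fin n → ℝ)) heq) j
    simp only at h
    rw [euclid_sum_apply] at h
    have hL : ((2 : ℝ) • (z - a) : EuclideanSpace ℝ (Fin n)) j = 2 * (z j - a j) := by
      simp [PiLp.smul_apply, PiLp.sub_apply]
    have hR : ∑ i ∈ I, (lam i • ((2 * v i) • EuclideanSpace.single i (1 : ℝ))) j = 0 := by
      refine Finset.sum_eq_zero fun i hi => ?_
      have hne : j ≠ i := fun h' => hj (h' ▸ hi)
      simp [EuclideanSpace.single_apply, hne]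
    rw [hL, hR] at h
    linarith
  · intro h
    refine ⟨fun i => if i ∈ I then (z i - a i) * v i else 0, fun i => ?_, ?_⟩
    · by_cases hi : i ∈ I
      · simp only [hi, if_true]
        rcases hv i hi with hv1 | hv1 <;>
          · have := (ha i).1; have := (ha i).2
            have hz := hzI i hi
            nlinarith
      · simp [hi]
    · apply PiLp.ext
      intro j
      have hL : ((2 : ℝ) • (z - a) : EuclideanSpace ℝ (Fin n)) j = 2 * (z j - a j) := by
        simp [PiLp.smul_apply, PiLp.sub_apply]
      show ((2 : ℝ) • (z - a) : EuclideanSpace ℝ (Fin n)) j = _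
      rw [hL, euclid_sum_apply]
      by_cases hj : j ∈ I
      · rw [Finset.sum_eq_single j]
        · have hvj2 : v j * v j = 1 := by rcases hv j hj with h1 | h1 <;> rw [h1] <;> ring
          simp only [hj, if_true, PiLp.smul_apply, EuclideanSpace.single_apply, if_true,
            smul_eq_mul]
          linear_combination (-2 * (z j - a j)) * hvj2
        · intro i hi hij
          have hne : j ≠ i := fun h' => hij h'.symm
          simp [EuclideanSpace.single_apply, hne, hi]
        · intro h'; exact absurd hj h'
      · rw [Finset.sum_eq_zero, h j hj]
        · ring
        · intro i hi
          have hne : j ≠ i := fun h' => hj (h' ▸ hi)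
          simp [EuclideanSpace.single_apply, hne, hi]
end
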